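/- Preservation of the Claim-B exclusion region under an R₃ update step: let Ω ⊆ S and let (c,p) ∈ Ω satisfy Ω ∩ ψ_B(c,p) = ∅. Then for every threshold t > 0, writing Ω' for the image of Ω under U_{3,t} and (c',p') = U_{3,t}(c,p), one has Ω' ∩ ψ_B(c',p') = ∅. -/

import Mathlib

/-- The RMM state space `S = {(x_C, x_P) : 0 ≤ x_C ≤ M, 0 ≤ x_P, x_C + x_P ≤ N}`. -/
def RMMState (N M : ℕ) : Set (ℤ × ℤ) :=
  {x | 0 ≤ x.1 ∧ x.1 ≤ (M : ℤ) ∧ 0 ≤ x.2 ∧ x.1 + x.2 ≤ (N : ℤ)}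

/-- The reaction rates `λ₁, λ₂, λ₃, λ₄` (indexed by `Fin 4`, so reaction `Rᵢ` has index `i-1`). -/
noncomputable def RMMrate (k₁ k₂ k₃ k₄ : ℝ) (N M : ℕ) (i : Fin 4) (x : ℤ × ℤ) : ℝ :=
  match i with
  | 0 => k₁ * ((N : ℝ) - (x.1 : ℝ) - (x.2 : ℝ)) * ((M : ℝ) - (x.1 : ℝ))
  | 1 => k₂ * (x.1 : ℝ)
  | 2 => k₃ * (x.1 : ℝ)
  | 3 => k₄ * (x.2 : ℝ) * ((M : ℝ) - (x.1 : ℝ))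

/-- The reaction displacements `R₁ = (1,0)`, `R₂ = (-1,0)`, `R₃ = (-1,1)`, `R₄ = (1,-1)`. -/
def RMMdisp : Fin 4 → ℤ × ℤ
  | 0 => (1, 0)
  | 1 => (-1, 0)
  | 2 => (-1, 1)
  | 3 => (1, -1)

/-- The coupled one-step update `U_{i,t}`: move by `Rᵢ` if `λᵢ(x) ≥ t`, stay put otherwise. -/
noncomputable def RMMupdate (k₁ k₂ k₃ k₄ : ℝ) (N M : ℕ) (i : Fin 4) (t : ℝ)
    (x : ℤ × ℤ) : ℤ × ℤ :=
  if RMMrate k₁ k₂ k₃ k₄ N M i x ≥ t then x + RMMdisp i else x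

/-- Claim-A exclusion region `ψ_A(c,p)`. -/
def psiA (c p : ℤ) : Set (ℤ × ℤ) :=
  {x | x.2 < p} ∪ {x | x.1 < c ∧ x.1 + x.2 ≤ c + p}

/-- Claim-B exclusion region `ψ_B(c,p)`. -/
def psiB (c p : ℤ) : Set (ℤ × ℤ) :=
  {x | x.2 > p} ∪ {x | x.1 > c ∧ x.1 + x.2 > c + p}

/-- The coupled flow: composition of the one-step updates along a list of parameters. -/
noncomputable def RMMflow (k₁ k₂ k₃ k₄ : ℝ) (N M : ℕ) (L : List (Fin 4 × ℝ))
    (x : ℤ × ℤ) : ℤ × ℤ :=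
  L.foldl (fun y q => RMMupdate k₁ k₂ k₃ k₄ N M q.1 q.2 y) x

/-- Preservation of the Claim-B exclusion region under an R3 update step. -/
theorem psiB_preserved_R3 (k₁ k₂ k₃ k₄ : ℝ)
    (hk₁ : 0 < k₁) (hk₂ : 0 < k₂) (hk₃ : 0 < k₃) (hk₄ : 0 < k₄)
    (N M : ℕ) (hM : 1 ≤ M) (hMN : M ≤ N)
    (Ω : Set (ℤ × ℤ)) (hΩ : Ω ⊆ RMMState N M)
    (c p : ℤ) (hcp : (c, p) ∈ Ω)
    (hdisj : Ω ∩ psiB c p = ∅)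
    (t : ℝ) (ht : 0 < t) :
    (RMMupdate k₁ k₂ k₃ k₄ N M 2 t '' Ω) ∩
      psiB (RMMupdate k₁ k₂ k₃ k₄ N M 2 t (c, p)).1
        (RMMupdate k₁ k₂ k₃ k₄ N M 2 t (c, p)).2 = ∅ := by
  rw [Set.eq_empty_iff_forall_notMem]
  rintro y ⟨⟨x, hxΩ, rfl⟩, hy⟩
  have hnx : x ∉ psiB c p := fun h =>
    (Set.eq_empty_iff_forall_notMem.mp hdisj x) ⟨hxΩ, h⟩
  simp only [psiB, Set.mem_union, Set.mem_setOf_eq, not_or, not_and, not_lt] at hnx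
  obtain ⟨h1, h2⟩ := hnx
  simp only [RMMupdate, RMMrate, RMMdisp] at hy
  by_cases hx : k₃ * (c : ℝ) ≥ t <;> by_cases hc : k₃ * (x.1 : ℝ) ≥ t <;> simp only [hx, hc, if_true, if_false] at hy
  · simp only [psiB, Prod.fst_add, Prod.snd_add, Set.mem_union, Set.mem_setOf_eq] at hy
    rcases hy with hy | ⟨hy1, hy2⟩
    · omega
    · have := h2; omega
  · -- x stays, (c,p) moves: k₃*x.1 < t ≤ k₃*c so x.1 < c
    have hxc : (x.1 : ℝ) < (c : ℝ) :=
      (mul_lt_mul_iff_right₀ hk₃).mp (lt_of_lt_of_le (not_le.mp hc) hx)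
    have hxc' : x.1 < c := by exact_mod_cast hxc
    simp only [psiB, Prod.fst_add, Prod.snd_add, Set.mem_union, Set.mem_setOf_eq] at hy
    rcases hy with hy | ⟨hy1, hy2⟩ <;> omega
  · -- x moves, (c,p) stays: k₃*c < t ≤ k₃*x.1 so c < x.1
    have hcx : (c : ℝ) < (x.1 : ℝ) :=
      (mul_lt_mul_iff_right₀ hk₃).mp (lt_of_lt_of_le (not_le.mp hx) hc)
    have hcx' : c < x.1 := by exact_mod_cast hcx
    have hsum : x.1 + x.2 ≤ c + p := h2 hcx'
    simp only [psiB, Prod.fst_add, Prod.snd_add, Set.mem_union, Set.mem_setOf_eq] at hy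
    rcases hy with hy | ⟨hy1, hy2⟩ <;> omega
  · simp only [psiB, Set.mem_union, Set.mem_setOf_eq] at hy
    rcases hy with hy | ⟨hy1, hy2⟩
    · omega
    · have := h2; omega
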